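/- Let r > r' ≥ 0 be real numbers and set c'' := (cosh(r)·cosh(r') − 1)/(cosh(r) − cosh(r')). Then: (i) c'' ≥ 1, with equality if and only if r' = 0; (ii) the number s'' := √(c''² − 1) satisfies s'' = sinh(r)·sinh(r')/(cosh(r) − cosh(r')); (iii) (c''·cosh(r) + 1)/(c'' + cosh(r)) = cosh(r'); (iv) cosh(r) − sinh(r)²/(c'' + cosh(r)) = cosh(r'); and (v) s''·sinh(r)/(c'' + cosh(r)) = sinh(r'). -/

import Mathlib

/-- **Hyperbolic identities for the unilateral two-mode squeezing transformation.**
For `r > r' ≥ 0` and `c'' = (cosh r · cosh r' − 1)/(cosh r − cosh r')`,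
`s'' = √(c''² − 1)`:
(i) `c'' ≥ 1` with equality iff `r' = 0`;
(ii) `s'' = sinh r · sinh r'/(cosh r − cosh r')`;
(iii) `(c''·cosh r + 1)/(c'' + cosh r) = cosh r'`;
(iv) `cosh r − sinh²r/(c'' + cosh r) = cosh r'`;
(v) `s''·sinh r/(c'' + cosh r) = sinh r'`. -/
theorem tmss_unilateral_identities (r r' c'' s'' : ℝ) (hr' : 0 ≤ r') (hrr' : r' < r)
    (hc : c'' = (Real.cosh r * Real.cosh r' - 1) / (Real.cosh r - Real.cosh r'))
    (hs : s'' = Real.sqrt (c'' ^ 2 - 1)) :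
    (1 ≤ c'' ∧ (c'' = 1 ↔ r' = 0)) ∧
    s'' = Real.sinh r * Real.sinh r' / (Real.cosh r - Real.cosh r') ∧
    (c'' * Real.cosh r + 1) / (c'' + Real.cosh r) = Real.cosh r' ∧
    Real.cosh r - Real.sinh r ^ 2 / (c'' + Real.cosh r) = Real.cosh r' ∧
    s'' * Real.sinh r / (c'' + Real.cosh r) = Real.sinh r' := by
  have hr : 0 < r := lt_of_le_of_lt hr' hrr'
  have hCC : Real.cosh r' < Real.cosh r := by
    rw [Real.cosh_lt_cosh, abs_of_nonneg hr', abs_of_pos hr]; exact hrr'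
  have hd : 0 < Real.cosh r - Real.cosh r' := sub_pos.mpr hCC
  have hd' : Real.cosh r - Real.cosh r' ≠ 0 := ne_of_gt hd
  have h1' : 1 ≤ Real.cosh r' := Real.one_le_cosh r'
  have h1 : 1 < Real.cosh r := Real.one_lt_cosh.mpr (ne_of_gt hr)
  have hsr : 0 < Real.sinh r := Real.sinh_pos_iff.mpr hr
  have hsr' : 0 ≤ Real.sinh r' := Real.sinh_nonneg_iff.mpr hr'
  have hidr : Real.cosh r ^ 2 - Real.sinh r ^ 2 = 1 := Real.cosh_sq_sub_sinh_sq r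
  have hidr' : Real.cosh r' ^ 2 - Real.sinh r' ^ 2 = 1 := Real.cosh_sq_sub_sinh_sq r'
  have hc1 : 1 ≤ c'' := by
    rw [hc, le_div_iff₀ hd]
    nlinarith
  have hcd : c'' + Real.cosh r = Real.sinh r ^ 2 / (Real.cosh r - Real.cosh r') := by
    rw [hc]; field_simp; nlinarith
  have hcpos : 0 < c'' + Real.cosh r := by positivity
  have hs2 : s'' = Real.sinh r * Real.sinh r' / (Real.cosh r - Real.cosh r') := by
    rw [hs]
    have : c'' ^ 2 - 1 = (Real.sinh r * Real.sinh r' / (Real.cosh r - Real.cosh r')) ^ 2 := by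
      rw [hc]; field_simp; nlinarith
    rw [this, Real.sqrt_sq (by positivity)]
  refine ⟨⟨hc1, ?_⟩, hs2, ?_, ?_, ?_⟩
  · constructor
    · intro h
      by_contra h0
      have h1'' : 1 < Real.cosh r' := Real.one_lt_cosh.mpr h0
      rw [hc, div_eq_one_iff_eq hd'] at h
      nlinarith
    · intro h; subst h; rw [hc, Real.cosh_zero, mul_one]
      exact div_self (by simpa using hd')
  · rw [hcd, hc]; field_simp; nlinarith
  · rw [hcd]; field_simp; ring
  · rw [hcd, hs2]; field_simp
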